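/- arXiv:1502.04436 — 6 statements merged into one kernel-verified Lean document; each statement's English description precedes it below -/
import Mathlib

section
/- For all positive integers k ≠ l and all integers a and b, the Laurent polynomials f_k(t^a) and f_l(t^b) are relatively prime in ℤ[t^{±1}], that is, every common divisor of f_k(t^a) and f_l(t^b) in the Laurent polynomial ring ℤ[t^{±1}] is a unit. -/
open LaurentPolynomial

/-- Pure commutative-ring computation: a product of four "mixed" combinations vanishes
when `a1 * a2 = 0` and `b1 * b2 = 0`. -/
private lemma four_ring {R : Type*} [CommRing R] (a1 a2 b1 b2 x1 y1 x2 y2 x3 y3 x4 y4 : R)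
    (h1 : a1 * a2 = 0) (h2 : b1 * b2 = 0) :
    (a1*x1 + b1*y1) * (a2*x2 + b2*y2) * ((a1*x3 + b2*y3) * (a2*x4 + b1*y4)) = 0 := by
  have hP : (a1*x1 + b1*y1) * (a2*x2 + b2*y2) = a1*b2*(x1*y2) + a2*b1*(x2*y1) := by
    linear_combination x1*x2*h1 + y1*y2*h2
  have hQ : (a1*x3 + b2*y3) * (a2*x4 + b1*y4) = a1*b1*(x3*y4) + a2*b2*(x4*y3) := by
    linear_combination x3*x4*h1 + y3*y4*h2
  rw [hP, hQ]
  linear_combination (b2*b2*(x1*y2)*(x4*y3) + b1*b1*(x2*y1)*(x3*y4))*h1 +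
    (a1*a1*(x1*y2)*(x3*y4) + a2*a2*(x2*y1)*(x4*y3))*h2

private lemma combine {R : Type*} [CommRing R] (d A1 A2 B1 B2 P1 P2 P3 P4 : R)
    (hA : d ∣ A1 * A2) (hB : d ∣ B1 * B2)
    (h11 : ∃ f g, A1 * f + B1 * g = P1)
    (h22 : ∃ f g, A2 * f + B2 * g = P2)
    (h12 : ∃ f g, A1 * f + B2 * g = P3)
    (h21 : ∃ f g, A2 * f + B1 * g = P4) :
    d ∣ P1 * P2 * (P3 * P4) := by
  obtain ⟨f1, g1, e1⟩ := h11
  obtain ⟨f2, g2, e2⟩ := h22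
  obtain ⟨f3, g3, e3⟩ := h12
  obtain ⟨f4, g4, e4⟩ := h21
  have mk0 : ∀ y : R, d ∣ y → Ideal.Quotient.mk (Ideal.span {d}) y = 0 := fun y hy =>
    Ideal.Quotient.eq_zero_iff_mem.mpr (Ideal.mem_span_singleton.mpr hy)
  apply Ideal.mem_span_singleton.mp
  apply Ideal.Quotient.eq_zero_iff_mem.mp
  rw [← e1, ← e2, ← e3, ← e4]
  simp only [map_mul, map_add]
  exact four_ring _ _ _ _ _ _ _ _ _ _ _ _
    (by rw [← map_mul]; exact mk0 _ hA) (by rw [← map_mul]; exact mk0 _ hB)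

/-- Elimination identity in the Laurent ring. -/
private lemma elim (u v w x : ℤ) (a b : ℤ) (p q : ℕ) (hpa : (p : ℤ) * a = (q : ℤ) * b) :
    ∃ f g : LaurentPolynomial ℤ,
      (C u * T a - C v) * f + (C w * T b - C x) * g
        = C (u ^ p * x ^ q - v ^ p * w ^ q) * T ((p : ℤ) * a) := by
  obtain ⟨f, hf⟩ := sub_dvd_pow_sub_pow (C u * T a) (C v) p
  obtain ⟨g, hg⟩ := sub_dvd_pow_sub_pow (C w * T b) (C x) q
  simp only [mul_pow, T_pow] at hf hg
  rw [← hpa] at hg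
  refine ⟨C x ^ q * f, -(C v ^ p * g), ?_⟩
  simp only [map_sub, map_mul, map_pow]
  linear_combination (C v : LaurentPolynomial ℤ) ^ p * hg - (C x : LaurentPolynomial ℤ) ^ q * hf

/-- Negating the exponent preserves divisibility of the symmetric product. -/
private lemma flip_T (u v : ℤ) (a : ℤ) (d : LaurentPolynomial ℤ)
    (h : d ∣ (C u * T a - C v) * (C v * T a - C u)) :
    d ∣ (C u * T (-a) - C v) * (C v * T (-a) - C u) := by
  have h1 : (T a : LaurentPolynomial ℤ) * T (-a) = 1 := by
    rw [← T_add, add_neg_cancel, T_zero]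
  have key : (C u * T (-a) - C v) * (C v * T (-a) - C u)
      = (C u * T a - C v) * (C v * T a - C u) * (T (-a) * T (-a)) := by
    linear_combination ((C u ^ 2 + C v ^ 2) * T (-a)
      - C u * C v * (1 + T a * T (-a)) : LaurentPolynomial ℤ) * h1
  rw [key]
  exact h.mul_right _

/-- The hard arithmetic inequality. -/
private lemma hard (k l p q : ℕ) (hk : 0 < k) (hl : 0 < l) (hp : 0 < p) (hq : 0 < q)
    (hkl : k < l) : k ^ p * (l + 1) ^ q ≠ (k + 1) ^ p * l ^ q := by
  intro h
  have cop1 : Nat.Coprime (k ^ p) ((k + 1) ^ p) := Nat.Coprime.pow _ _ (by simp)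
  have cop2 : Nat.Coprime (l ^ q) ((l + 1) ^ q) := Nat.Coprime.pow _ _ (by simp)
  have h1 : k ^ p ∣ l ^ q := by
    refine cop1.dvd_of_dvd_mul_left ?_
    rw [← h]
    exact dvd_mul_right _ _
  have h2 : l ^ q ∣ k ^ p := by
    refine cop2.dvd_of_dvd_mul_right ?_
    rw [h]
    exact dvd_mul_left _ _
  have e1 : k ^ p = l ^ q := Nat.dvd_antisymm h1 h2
  have e2 : (l + 1) ^ q = (k + 1) ^ p := by
    rw [e1] at h
    exact Nat.eq_of_mul_eq_mul_left (pow_pos hl q) (h.trans (mul_comm _ _))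
  rcases Nat.lt_or_ge k 2 with hk2 | hk2
  · have hk1 : k = 1 := by omega
    subst hk1
    have : 1 < l ^ q := Nat.one_lt_pow hq.ne' (by omega)
    rw [one_pow] at e1
    omega
  · have hqp : q < p := by
      have hlt : k ^ q < k ^ p := by
        calc k ^ q < l ^ q := Nat.pow_lt_pow_left hkl hq.ne'
        _ = k ^ p := e1.symm
      exact (Nat.pow_lt_pow_iff_right hk2).mp hlt
    have key : ((k + 1) * l) ^ p < (k * (l + 1)) ^ p := by
      have expand1 : (k * (l + 1)) ^ p = l ^ q * (l + 1) ^ p := by rw [mul_pow, e1]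
      have expand2 : ((k + 1) * l) ^ p = (l + 1) ^ q * l ^ p := by rw [mul_pow, ← e2]
      rw [expand1, expand2]
      obtain ⟨r, hr, hr0⟩ : ∃ r, p = q + r ∧ 0 < r := ⟨p - q, by omega, by omega⟩
      subst hr
      have h3 : l ^ r < (l + 1) ^ r := Nat.pow_lt_pow_left (Nat.lt_succ_self l) (by omega)
      calc (l + 1) ^ q * l ^ (q + r) = (l + 1) ^ q * l ^ q * l ^ r := by ring
        _ < (l + 1) ^ q * l ^ q * (l + 1) ^ r := by
            have hpos : 0 < (l + 1) ^ q * l ^ q := Nat.mul_pos (pow_pos (by omega) q) (pow_pos hl q)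
            exact mul_lt_mul_of_pos_left h3 hpos
        _ = l ^ q * ((l + 1) ^ q * (l + 1) ^ r) := by ring
        _ = l ^ q * (l + 1) ^ (q + r) := by rw [← pow_add]
    have hlt : (k + 1) * l < k * (l + 1) := by
      exact (Nat.pow_lt_pow_iff_left hp.ne').mp key
    have : k * l + l < k * l + k := by
      calc k * l + l = (k + 1) * l := by ring
      _ < k * (l + 1) := hlt
      _ = k * l + k := by ring
    omega

private lemma easy (k l p q : ℕ) (hp : 0 < p) (hq : 0 < q) :
    k ^ p * l ^ q < (k + 1) ^ p * (l + 1) ^ q := by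
  have h1 : k ^ p < (k + 1) ^ p := Nat.pow_lt_pow_left (Nat.lt_succ_self k) hp.ne'
  have h2 : l ^ q < (l + 1) ^ q := Nat.pow_lt_pow_left (Nat.lt_succ_self l) hq.ne'
  calc k ^ p * l ^ q ≤ k ^ p * (l + 1) ^ q := Nat.mul_le_mul_left _ h2.le
    _ < (k + 1) ^ p * (l + 1) ^ q :=
      mul_lt_mul_of_pos_right h1 (pow_pos (by omega) q)

/-- The polynomial-world endgame. -/
private lemma poly_step (u v : ℕ) (huv : Nat.Coprime u v) (α : ℕ) (hα : 0 < α) (M : ℤ)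
    (hM : M ≠ 0) (d₀ : Polynomial ℤ) (s t : ℕ)
    (h1 : d₀ ∣ Polynomial.C M * Polynomial.X ^ s)
    (h2 : d₀ ∣ (Polynomial.C (u : ℤ) * Polynomial.X ^ α - Polynomial.C (v : ℤ)) *
      (Polynomial.C (v : ℤ) * Polynomial.X ^ α - Polynomial.C (u : ℤ)) * Polynomial.X ^ t) :
    IsUnit (Polynomial.toLaurent d₀) := by
  revert h1 h2
  induction d₀ using UniqueFactorizationMonoid.induction_on_prime with
  | h₁ =>
    intro h1 _
    exfalso
    rw [zero_dvd_iff, mul_eq_zero] at h1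
    rcases h1 with h | h
    · exact hM (by simpa using h)
    · exact pow_ne_zero _ Polynomial.X_ne_zero h
  | h₂ z hz =>
    intro _ _
    exact hz.map _
  | h₃ a0 p ha0 hp IH =>
    intro h1 h2
    have hunit_a : IsUnit (Polynomial.toLaurent a0) :=
      IH ((dvd_mul_left a0 p).trans h1) ((dvd_mul_left a0 p).trans h2)
    rw [map_mul]
    refine IsUnit.mul ?_ hunit_a
    have hpd1 : p ∣ Polynomial.C M * Polynomial.X ^ s := (dvd_mul_right p a0).trans h1
    rcases hp.2.2 _ _ hpd1 with hCp | hXp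
    · -- p divides a nonzero constant, so p = C c with c prime
      exfalso
      have hdeg : p.natDegree = 0 := by
        have := Polynomial.natDegree_le_of_dvd hCp (by simp [hM])
        simpa using this
      obtain ⟨c, hc⟩ := Polynomial.natDegree_eq_zero.mp hdeg
      have hcprime : Prime c := by rwa [← hc, Polynomial.prime_C_iff] at hp
      rw [← hc] at hp
      have hpd2 := (dvd_mul_right p a0).trans h2
      rw [← hc] at hpd2
      have hCeval : ∀ g : Polynomial ℤ, Polynomial.C c ∣ g → c ∣ g.eval 1 := by
        rintro g ⟨h', rfl⟩
        simp
      have coeffs : ∀ u' v' : ℤ,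
          Polynomial.C c ∣ Polynomial.C u' * Polynomial.X ^ α - Polynomial.C v' →
          c ∣ u' ∧ c ∣ v' := by
        rintro u' v' ⟨h', hh⟩
        constructor
        · have e := congrArg (fun f => Polynomial.coeff f α) hh
          simp only [Polynomial.coeff_sub, Polynomial.coeff_C_mul, Polynomial.coeff_X_pow,
            Polynomial.coeff_C, if_pos rfl, if_true, if_neg hα.ne', mul_one, sub_zero] at e
          exact ⟨_, e⟩
        · have e := congrArg (fun f => Polynomial.coeff f 0) hh
          simp only [Polynomial.coeff_sub, Polynomial.coeff_C_mul, Polynomial.coeff_X_pow,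
            Polynomial.coeff_C, if_pos rfl, if_true, if_neg (Ne.symm hα.ne'), mul_zero, zero_sub] at e
          refine ⟨-(h'.coeff 0), ?_⟩
          rw [mul_neg, ← e, neg_neg]
      have hcop : IsCoprime (u : ℤ) (v : ℤ) := Nat.isCoprime_iff_coprime.mpr huv
      rcases hp.2.2 _ _ hpd2 with hAB | hXt
      · rcases hp.2.2 _ _ hAB with hA | hB
        · obtain ⟨hu, hv⟩ := coeffs _ _ hA
          exact hcprime.not_unit (hcop.isUnit_of_dvd' hu hv)
        · obtain ⟨hv, hu⟩ := coeffs _ _ hB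
          exact hcprime.not_unit (hcop.isUnit_of_dvd' hu hv)
      · have := hCeval _ hXt
        simp at this
        exact hcprime.not_unit (isUnit_of_dvd_one this)
    · -- p divides a power of X, hence toLaurent p divides the unit T
      have hpX : p ∣ Polynomial.X := hp.dvd_of_dvd_pow hXp
      have : Polynomial.toLaurent p ∣ T 1 := by
        rw [← Polynomial.toLaurent_X]
        exact Polynomial.toLaurent.toMonoidHom.map_dvd hpX
      exact isUnit_of_dvd_unit this (isUnit_T 1)

/-- Transfer of divisibility from the Laurent ring to the polynomial ring. -/
private lemma transfer (d : LaurentPolynomial ℤ) (n : ℕ) (d₀ : Polynomial ℤ)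
    (hd₀ : Polynomial.toLaurent d₀ = d * T n) (f₀ : Polynomial ℤ)
    (hf : d ∣ Polynomial.toLaurent f₀) : ∃ s : ℕ, d₀ ∣ f₀ * Polynomial.X ^ s := by
  obtain ⟨e, he⟩ := hf
  obtain ⟨r, e₀, he₀⟩ := exists_T_pow e
  refine ⟨n + r, e₀, ?_⟩
  apply Polynomial.toLaurent_injective
  calc Polynomial.toLaurent (f₀ * Polynomial.X ^ (n + r))
      = Polynomial.toLaurent f₀ * (T n * T r) := by
        rw [map_mul, Polynomial.toLaurent_X_pow, Nat.cast_add, T_add]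
    _ = (d * T n) * (e * T r) := by
        rw [he]
        ring
    _ = Polynomial.toLaurent (d₀ * e₀) := by rw [map_mul, hd₀, he₀]

/-- Main lemma for positive exponents, stated in symmetric form. -/
private lemma main_pos (k l : ℕ) (hk : 0 < k) (hl : 0 < l) (hkl : k ≠ l) (a b : ℤ)
    (ha : 0 < a) (hb : 0 < b) (d : LaurentPolynomial ℤ)
    (hdk : d ∣ (C (k : ℤ) * T a - C ((k + 1 : ℕ) : ℤ)) *
      (C ((k + 1 : ℕ) : ℤ) * T a - C (k : ℤ)))
    (hdl : d ∣ (C (l : ℤ) * T b - C ((l + 1 : ℕ) : ℤ)) *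
      (C ((l + 1 : ℕ) : ℤ) * T b - C (l : ℤ))) :
    IsUnit d := by
  set p := b.toNat with hpdef
  set q := a.toNat with hqdef
  have hpz : (p : ℤ) = b := Int.toNat_of_nonneg hb.le
  have hqz : (q : ℤ) = a := Int.toNat_of_nonneg ha.le
  have hp0 : 0 < p := by omega
  have hq0 : 0 < q := by omega
  have hpa : (p : ℤ) * a = (q : ℤ) * b := by rw [hpz, hqz]; ring
  -- the four constants
  set m11 : ℤ := (k : ℤ) ^ p * ((l + 1 : ℕ) : ℤ) ^ q - ((k + 1 : ℕ) : ℤ) ^ p * (l : ℤ) ^ q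
  set m22 : ℤ := ((k + 1 : ℕ) : ℤ) ^ p * (l : ℤ) ^ q - (k : ℤ) ^ p * ((l + 1 : ℕ) : ℤ) ^ q
  set m12 : ℤ := (k : ℤ) ^ p * (l : ℤ) ^ q - ((k + 1 : ℕ) : ℤ) ^ p * ((l + 1 : ℕ) : ℤ) ^ q
  set m21 : ℤ := ((k + 1 : ℕ) : ℤ) ^ p * ((l + 1 : ℕ) : ℤ) ^ q - (k : ℤ) ^ p * (l : ℤ) ^ q
  have hhard : k ^ p * (l + 1) ^ q ≠ (k + 1) ^ p * l ^ q := by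
    rcases Nat.lt_or_ge k l with h | h
    · exact hard k l p q hk hl hp0 hq0 h
    · have hlk : l < k := by omega
      intro hEq
      exact hard l k q p hl hk hq0 hp0 hlk (by linarith [hEq])
  have hm11 : m11 ≠ 0 := by
    simp only [m11, sub_ne_zero]
    intro hEq
    exact hhard (by exact_mod_cast hEq)
  have hm22 : m22 ≠ 0 := by
    simp only [m22, sub_ne_zero]
    intro hEq
    exact hhard (by exact_mod_cast hEq.symm)
  have heasy := easy k l p q hp0 hq0
  have hm12 : m12 ≠ 0 := by
    simp only [m12, sub_ne_zero]
    intro hEq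
    have : k ^ p * l ^ q = (k + 1) ^ p * (l + 1) ^ q := by exact_mod_cast hEq
    omega
  have hm21 : m21 ≠ 0 := by
    simp only [m21, sub_ne_zero]
    intro hEq
    have : k ^ p * l ^ q = (k + 1) ^ p * (l + 1) ^ q := by exact_mod_cast hEq.symm
    omega
  -- combine divisibilities into d ∣ C M
  set γ : ℤ := (p : ℤ) * a with hγ
  have h11 := elim (k : ℤ) ((k + 1 : ℕ) : ℤ) (l : ℤ) ((l + 1 : ℕ) : ℤ) a b p q hpa
  have h22 := elim ((k + 1 : ℕ) : ℤ) (k : ℤ) ((l + 1 : ℕ) : ℤ) (l : ℤ) a b p q hpa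
  have h12 := elim (k : ℤ) ((k + 1 : ℕ) : ℤ) ((l + 1 : ℕ) : ℤ) (l : ℤ) a b p q hpa
  have h21 := elim ((k + 1 : ℕ) : ℤ) (k : ℤ) (l : ℤ) ((l + 1 : ℕ) : ℤ) a b p q hpa
  have hdP : d ∣ (C m11 * T γ) * (C m22 * T γ) * ((C m12 * T γ) * (C m21 * T γ)) :=
    combine d _ _ _ _ _ _ _ _ hdk hdl h11 h22 h12 h21
  set M : ℤ := m11 * m22 * (m12 * m21) with hMdef
  have hM : M ≠ 0 := by
    simp only [hMdef]
    exact mul_ne_zero (mul_ne_zero hm11 hm22) (mul_ne_zero hm12 hm21)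
  have hdM : d ∣ C M := by
    have step : (C m11 * T γ) * (C m22 * T γ) * ((C m12 * T γ) * (C m21 * T γ)) *
        (T (-γ) * T (-γ) * (T (-γ) * T (-γ))) = C M := by
      have ht : (T γ : LaurentPolynomial ℤ) * T (-γ) = 1 := by
        rw [← T_add, add_neg_cancel, T_zero]
      calc (C m11 * T γ) * (C m22 * T γ) * ((C m12 * T γ) * (C m21 * T γ)) *
          (T (-γ) * T (-γ) * (T (-γ) * T (-γ)))
          = (C m11 * C m22 * (C m12 * C m21)) *
            ((T γ * T (-γ)) * (T γ * T (-γ)) * ((T γ * T (-γ)) * (T γ * T (-γ)))) := by ring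
        _ = C m11 * C m22 * (C m12 * C m21) := by rw [ht]; ring
        _ = C M := by rw [hMdef, map_mul, map_mul, map_mul]
    rw [← step]
    exact hdP.mul_right _
  -- transfer to the polynomial world
  obtain ⟨n, d₀, hd₀⟩ := exists_T_pow d
  obtain ⟨s, hs⟩ := transfer d n d₀ hd₀ (Polynomial.C M) (by rwa [Polynomial.toLaurent_C])
  have hFk : Polynomial.toLaurent
      ((Polynomial.C (k : ℤ) * Polynomial.X ^ q - Polynomial.C ((k + 1 : ℕ) : ℤ)) *
        (Polynomial.C ((k + 1 : ℕ) : ℤ) * Polynomial.X ^ q - Polynomial.C (k : ℤ)))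
      = (C (k : ℤ) * T a - C ((k + 1 : ℕ) : ℤ)) * (C ((k + 1 : ℕ) : ℤ) * T a - C (k : ℤ)) := by
    simp only [map_mul, map_sub, Polynomial.toLaurent_C, Polynomial.toLaurent_X_pow, hqz]
  obtain ⟨t, ht⟩ := transfer d n d₀ hd₀ _ (hFk ▸ hdk)
  have hcop : Nat.Coprime k (k + 1) := by simp
  have hunit := poly_step k (k + 1) hcop q hq0 M hM d₀ s t hs ht
  rw [hd₀] at hunit
  exact isUnit_of_mul_isUnit_left hunit

/-- For positive integers `k ≠ l` and all integers `a`, `b`, the Laurent polynomials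
`f_k(t^a)` and `f_l(t^b)` are relatively prime in `ℤ[t^{±1}]`, where
`f_k(t) = (kt − (k+1))((k+1)t − k)`: every common divisor is a unit. -/
theorem fk_pairwise_strongly_coprime (k l : ℕ) (hk : 0 < k) (hl : 0 < l) (hkl : k ≠ l)
    (a b : ℤ) (d : LaurentPolynomial ℤ)
    (hdk : d ∣ (C (k : ℤ) * T a - C ((k : ℤ) + 1)) * (C ((k : ℤ) + 1) * T a - C (k : ℤ)))
    (hdl : d ∣ (C (l : ℤ) * T b - C ((l : ℤ) + 1)) * (C ((l : ℤ) + 1) * T b - C (l : ℤ))) :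
    IsUnit d := by
  have cast1 : ((k + 1 : ℕ) : ℤ) = (k : ℤ) + 1 := by push_cast; ring
  have cast2 : ((l + 1 : ℕ) : ℤ) = (l : ℤ) + 1 := by push_cast; ring
  rw [← cast1] at hdk
  rw [← cast2] at hdl
  -- dispose of the zero-exponent cases
  rcases eq_or_ne a 0 with rfl | ha0
  · have : (C (k : ℤ) * T (0:ℤ) - C ((k + 1 : ℕ) : ℤ)) *
        (C ((k + 1 : ℕ) : ℤ) * T (0:ℤ) - C (k : ℤ)) = C (-1) := by
      rw [T_zero, mul_one, mul_one, ← map_sub, ← map_sub, ← map_mul]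
      congr 1
      push_cast
      ring
    rw [this] at hdk
    have hu : IsUnit (C (-1) : LaurentPolynomial ℤ) := by
      have : (C (-1) : LaurentPolynomial ℤ) = -1 := by
        rw [map_neg, map_one]
      rw [this]
      exact isUnit_one.neg
    exact isUnit_of_dvd_unit hdk hu
  rcases eq_or_ne b 0 with rfl | hb0
  · have : (C (l : ℤ) * T (0:ℤ) - C ((l + 1 : ℕ) : ℤ)) *
        (C ((l + 1 : ℕ) : ℤ) * T (0:ℤ) - C (l : ℤ)) = C (-1) := by
      rw [T_zero, mul_one, mul_one, ← map_sub, ← map_sub, ← map_mul]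
      congr 1
      push_cast
      ring
    rw [this] at hdl
    have hu : IsUnit (C (-1) : LaurentPolynomial ℤ) := by
      have : (C (-1) : LaurentPolynomial ℤ) = -1 := by
        rw [map_neg, map_one]
      rw [this]
      exact isUnit_one.neg
    exact isUnit_of_dvd_unit hdl hu
  -- make the exponents positive
  have hdk' : ∀ a' : ℤ, 0 < a' → d ∣ (C (k : ℤ) * T a' - C ((k + 1 : ℕ) : ℤ)) *
      (C ((k + 1 : ℕ) : ℤ) * T a' - C (k : ℤ)) →
      ∀ b' : ℤ, 0 < b' → d ∣ (C (l : ℤ) * T b' - C ((l + 1 : ℕ) : ℤ)) *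
      (C ((l + 1 : ℕ) : ℤ) * T b' - C (l : ℤ)) → IsUnit d := by
    intro a' ha' h1 b' hb' h2
    exact main_pos k l hk hl hkl a' b' ha' hb' d h1 h2
  rcases lt_or_gt_of_ne ha0 with ha | ha <;> rcases lt_or_gt_of_ne hb0 with hb | hb
  · exact hdk' (-a) (by omega) (flip_T _ _ a d hdk) (-b) (by omega) (flip_T _ _ b d hdl)
  · exact hdk' (-a) (by omega) (flip_T _ _ a d hdk) b hb hdl
  · exact hdk' a ha hdk (-b) (by omega) (flip_T _ _ b d hdl)
  · exact hdk' a ha hdk b hb hdl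
end

section
/- For all positive integers k ≠ l and all integers a, b: if ((k+1)/k)^a = ((l+1)/l)^b holds in ℚ, then a = 0 and b = 0. -/
lemma pos_case_lt (k l m n : ℕ) (hk : 0 < k) (hl : 0 < l) (hkl : k < l)
    (hm : 0 < m) (hn : 0 < n)
    (h : (((k : ℚ) + 1) / (k : ℚ)) ^ m = (((l : ℚ) + 1) / (l : ℚ)) ^ n) : False := by
  have hk0 : (k : ℚ) ≠ 0 := by positivity
  have hl0 : (l : ℚ) ≠ 0 := by positivity
  have hq : ((k : ℚ) + 1) ^ m * (l : ℚ) ^ n = ((l : ℚ) + 1) ^ n * (k : ℚ) ^ m := by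
    rw [div_pow, div_pow, div_eq_div_iff (by positivity) (by positivity)] at h
    linarith [h]
  have hN : (k + 1) ^ m * l ^ n = (l + 1) ^ n * k ^ m := by exact_mod_cast hq
  have hcopk : Nat.Coprime (k ^ m) ((k + 1) ^ m) := (by
    have hc : Nat.Coprime k (k+1) := by simp [Nat.coprime_add_self_right]
    exact Nat.Coprime.pow _ _ hc)
  have hcopl : Nat.Coprime (l ^ n) ((l + 1) ^ n) := (by
    have hc : Nat.Coprime l (l+1) := by simp [Nat.coprime_add_self_right]
    exact Nat.Coprime.pow _ _ hc)
  have hd1 : k ^ m ∣ l ^ n :=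
    hcopk.dvd_of_dvd_mul_right ⟨(l + 1) ^ n, by linarith [hN]⟩
  have hd2 : l ^ n ∣ k ^ m :=
    hcopl.dvd_of_dvd_mul_right ⟨(k + 1) ^ m, by linarith [hN]⟩
  have heq : k ^ m = l ^ n := Nat.dvd_antisymm hd1 hd2
  -- k = 1 impossible
  have hk2 : 2 ≤ k := by
    by_contra hc
    have hk1 : k = 1 := by omega
    subst hk1
    rw [one_pow] at heq
    have h2 : 1 < l ^ n := Nat.one_lt_pow hn.ne' (by omega)
    omega
  -- m > n
  have hmn : n < m := by
    by_contra hc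
    push_neg at hc
    have h1 : k ^ m ≤ k ^ n := Nat.pow_le_pow_right hk hc
    have h2 : k ^ n < l ^ n := Nat.pow_lt_pow_left hkl hn.ne'
    omega
  -- but then LHS > RHS in ℚ
  have hqk : (1 : ℚ) < ((k : ℚ) + 1) / k := by
    rw [lt_div_iff₀ (by positivity)]
    linarith
  have hql : (0 : ℚ) ≤ ((l : ℚ) + 1) / l := by positivity
  have hlt : ((l : ℚ) + 1) / l < ((k : ℚ) + 1) / k := by
    rw [div_lt_div_iff₀ (by positivity) (by positivity)]
    have : (k : ℚ) < l := by exact_mod_cast hkl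
    nlinarith
  have h1 : (((l : ℚ) + 1) / l) ^ n < (((k : ℚ) + 1) / k) ^ n :=
    pow_lt_pow_left₀ hlt hql hn.ne'
  have h2 : (((k : ℚ) + 1) / k) ^ n < (((k : ℚ) + 1) / k) ^ m :=
    pow_lt_pow_right₀ hqk hmn
  linarith [h.symm ▸ h1, h2, h.ge]

lemma pos_case (k l m n : ℕ) (hk : 0 < k) (hl : 0 < l) (hkl : k ≠ l)
    (hm : 0 < m) (hn : 0 < n)
    (h : (((k : ℚ) + 1) / (k : ℚ)) ^ m = (((l : ℚ) + 1) / (l : ℚ)) ^ n) : False := by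
  rcases lt_or_gt_of_ne hkl with h' | h'
  · exact pos_case_lt k l m n hk hl h' hm hn h
  · exact pos_case_lt l k n m hl hk h' hn hm h.symm

/-- For positive integers `k ≠ l` and integers `a`, `b`: if
`((k+1)/k)^a = ((l+1)/l)^b` in `ℚ`, then `a = 0` and `b = 0`. -/
theorem multiplicative_independence (k l : ℕ) (hk : 0 < k) (hl : 0 < l) (hkl : k ≠ l)
    (a b : ℤ) (h : (((k : ℚ) + 1) / (k : ℚ)) ^ a = (((l : ℚ) + 1) / (l : ℚ)) ^ b) :
    a = 0 ∧ b = 0 := by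
  have hqk : (1 : ℚ) < ((k : ℚ) + 1) / k := by
    rw [lt_div_iff₀ (by positivity)]
    push_cast
    have : (1 : ℚ) ≤ k := by exact_mod_cast hk
    linarith
  have hql : (1 : ℚ) < ((l : ℚ) + 1) / l := by
    rw [lt_div_iff₀ (by positivity)]
    have : (1 : ℚ) ≤ l := by exact_mod_cast hl
    linarith
  rcases lt_trichotomy a 0 with ha | ha | ha
  · -- a < 0, then LHS < 1, so b < 0; apply pos case to -a, -b
    have hlhs : (((k : ℚ) + 1) / k) ^ a < 1 := zpow_lt_one_of_neg₀ hqk ha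
    have hb : b < 0 := by
      by_contra hb
      push_neg at hb
      have : (1 : ℚ) ≤ (((l : ℚ) + 1) / l) ^ b := one_le_zpow₀ hql.le hb
      linarith [h ▸ this]
    exfalso
    have h' : (((k : ℚ) + 1) / k) ^ (-a) = (((l : ℚ) + 1) / l) ^ (-b) := by
      rw [zpow_neg, zpow_neg, h]
    have h'' : (((k : ℚ) + 1) / k) ^ (-a).toNat = (((l : ℚ) + 1) / l) ^ (-b).toNat := by
      rw [← zpow_natCast, ← zpow_natCast, Int.toNat_of_nonneg (by omega),
        Int.toNat_of_nonneg (by omega)]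
      exact h'
    exact pos_case k l _ _ hk hl hkl (by omega) (by omega) h''
  · -- a = 0
    subst ha
    refine ⟨rfl, ?_⟩
    simp only [zpow_zero] at h
    by_contra hb
    rcases lt_or_gt_of_ne hb with hb' | hb'
    · have : (((l : ℚ) + 1) / l) ^ b < 1 := zpow_lt_one_of_neg₀ hql hb'
      linarith [h ▸ this]
    · have : (1 : ℚ) < (((l : ℚ) + 1) / l) ^ b := one_lt_zpow₀ hql hb'
      linarith [h ▸ this]
  · -- a > 0
    have hlhs : (1 : ℚ) < (((k : ℚ) + 1) / k) ^ a := one_lt_zpow₀ hqk ha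
    have hb : 0 < b := by
      by_contra hb
      push_neg at hb
      have : (((l : ℚ) + 1) / l) ^ b ≤ 1 := zpow_le_one_of_nonpos₀ hql.le hb
      linarith [h ▸ this]
    exfalso
    have h'' : (((k : ℚ) + 1) / k) ^ a.toNat = (((l : ℚ) + 1) / l) ^ b.toNat := by
      rw [← zpow_natCast, ← zpow_natCast, Int.toNat_of_nonneg ha.le,
        Int.toNat_of_nonneg hb.le]
      exact h
    exact pos_case k l _ _ hk hl hkl (by omega) (by omega) h''
end

section
/- Let R be a commutative ring, G a group, and A a normal subgroup of G such that the group ring R[A] is a domain (nonzero with no zero divisors). Regard R[A] as a subring of R[G]. Let S₀ be a multiplicatively closed subset of R[A] with 0 ∉ S₀ which is a right divisor set of R[A] (for every a ∈ R[A] and s ∈ S₀ there exist a' ∈ R[A] and s' ∈ S₀ with a·s' = s·a') and which is G-invariant, i.e., g⁻¹S₀g = S₀ for every g ∈ G, where g also denotes the corresponding group-ring element and conjugation is taken inside R[G] (conjugation by g preserves R[A] because A is normal). Then S₀ is a right divisor set of R[G]: 0 ∉ S₀ and for every a ∈ R[G] and s ∈ S₀ there exist a' ∈ R[G] and s' ∈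 S₀ with a·s' = s·a'. -/
open MonoidAlgebra Pointwise

/-- Proposition 4.1 of Cochran–Harvey–Leidy: if `A` is a normal subgroup of `G` such that
`R[A]` is a domain, and `S₀ ⊆ R[A]` is a multiplicatively closed, `G`-invariant right divisor
set of `R[A]` not containing `0`, then (the image of) `S₀` is a right divisor set of `R[G]`. -/
theorem right_divisor_set_of_group_invariant
    (R : Type*) [CommRing R] (G : Type*) [Group G] (A : Subgroup G) (hA : A.Normal)
    (hdom : IsDomain (MonoidAlgebra R A))
    (ι : MonoidAlgebra R A →+* MonoidAlgebra R G)
    (hι : ι = MonoidAlgebra.mapDomainRingHom R A.subtype)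
    (S₀ : Set (MonoidAlgebra R A))
    (hmul : ∀ s ∈ S₀, ∀ t ∈ S₀, s * t ∈ S₀)
    (h0 : (0 : MonoidAlgebra R A) ∉ S₀)
    (hdiv : ∀ a : MonoidAlgebra R A, ∀ s ∈ S₀,
      ∃ a' : MonoidAlgebra R A, ∃ s' ∈ S₀, a * s' = s * a')
    (hinv : ∀ g : G,
      (fun x => (MonoidAlgebra.of R G g⁻¹) * x * (MonoidAlgebra.of R G g)) '' (ι '' S₀)
        = ι '' S₀) :
    (0 : MonoidAlgebra R G) ∉ ι '' S₀ ∧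
      ∀ a : MonoidAlgebra R G, ∀ s ∈ S₀,
        ∃ a' : MonoidAlgebra R G, ∃ s' ∈ S₀, a * ι s' = ι s * a' := by
  classical
  -- ι as a function is `Finsupp.mapDomain A.subtype`, which is injective
  have hιfun : ∀ x : MonoidAlgebra R A, ι x = MonoidAlgebra.mapDomain A.subtype x := by
    intro x; rw [hι]; rfl
  have hinj : Function.Injective ι := by
    intro x y hxy
    rw [hιfun, hιfun] at hxy
    exact MonoidAlgebra.mapDomain_injective (Subgroup.subtype_injective A) hxy
  -- the support of ι t lies in A
  have hsupp_ι : ∀ t : MonoidAlgebra R A, ∀ x ∈ (ι t).coeff.support, x ∈ A := by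
    intro t x hx
    rw [hιfun] at hx
    have := Finsupp.mapDomain_support (f := A.subtype) (s := t.coeff) hx
    simp only [Finset.mem_image] at this
    obtain ⟨y, _, rfl⟩ := this
    exact y.2
  -- conjugation fact
  have hconj : ∀ g : G, ∀ s ∈ S₀, ∃ s' ∈ S₀,
      ι s' = (MonoidAlgebra.of R G g⁻¹) * ι s * (MonoidAlgebra.of R G g) := by
    intro g s hs
    have hmem : (MonoidAlgebra.of R G g⁻¹) * ι s * (MonoidAlgebra.of R G g) ∈ ι '' S₀ := by
      rw [← hinv g]
      exact ⟨ι s, ⟨s, hs, rfl⟩, rfl⟩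
    obtain ⟨s', hs', heq⟩ := hmem
    exact ⟨s', hs', heq⟩
  -- elements supported in a single coset of A
  have hrep : ∀ (a : MonoidAlgebra R G) (g : G),
      (∀ x ∈ a.coeff.support, (x : G ⧸ A) = (g : G ⧸ A)) →
      ∃ y : MonoidAlgebra R A, a = (MonoidAlgebra.of R G g) * ι y := by
    intro a g hg
    set b : MonoidAlgebra R G := (MonoidAlgebra.of R G g⁻¹) * a with hb
    have hbsupp : (↑b.coeff.support : Set G) ⊆ Set.range A.subtype := by
      intro x hx
      have hx' : x ∈ (MonoidAlgebra.of R G g⁻¹).coeff.support * a.coeff.support :=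
        MonoidAlgebra.support_coeff_mul_subset _ _ hx
      rw [Finset.mem_mul] at hx'
      obtain ⟨u, hu, v, hv, rfl⟩ := hx'
      have hu' : u = g⁻¹ := by
        have := Finsupp.support_single_subset hu
        simpa using this
      subst hu'
      have hvA : g⁻¹ * v ∈ A := by
        have := (hg v hv).symm
        rw [QuotientGroup.eq] at this
        exact this
      exact ⟨⟨g⁻¹ * v, hvA⟩, rfl⟩
    refine ⟨MonoidAlgebra.comapDomain A.subtype (Subgroup.subtype_injective A) b, ?_⟩
    have : ι (MonoidAlgebra.comapDomain A.subtype (Subgroup.subtype_injective A) b) = b := by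
      rw [hιfun]
      exact MonoidAlgebra.mapDomain_comapDomain hbsupp (Subgroup.subtype_injective A)
    rw [this, hb, ← mul_assoc]
    have : (MonoidAlgebra.of R G g) * (MonoidAlgebra.of R G g⁻¹) = 1 := by
      rw [← map_mul, mul_inv_cancel, map_one]
    rw [this, one_mul]
  constructor
  · rintro ⟨x, hx, hx0⟩
    exact h0 (by rwa [show x = 0 from hinj (by rw [hx0, map_zero])] at hx)
  -- main claim, by induction on the number of cosets meeting the support
  · have key : ∀ n : ℕ, ∀ a : MonoidAlgebra R G,
        (a.coeff.support.image (QuotientGroup.mk : G → G ⧸ A)).card ≤ n →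
        ∀ s ∈ S₀, ∃ a' : MonoidAlgebra R G, ∃ s' ∈ S₀, a * ι s' = ι s * a' := by
      intro n
      induction n with
      | zero =>
        intro a ha s hs
        have : a = 0 := by
          have h1 : a.coeff.support.image (QuotientGroup.mk : G → G ⧸ A) = ∅ :=
            Finset.card_eq_zero.mp (Nat.le_zero.mp ha)
          have h2 : a.coeff.support = ∅ := Finset.image_eq_empty.mp h1
          exact MonoidAlgebra.coeff_eq_zero.mp (Finsupp.support_eq_empty.mp h2)
        exact ⟨0, s, hs, by simp [this]⟩
      | succ n ih =>
        intro a ha s hs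
        rcases eq_or_ne a 0 with rfl | hane
        · exact ⟨0, s, hs, by simp⟩
        obtain ⟨g, hg⟩ := Finsupp.support_nonempty_iff.mpr (MonoidAlgebra.coeff_eq_zero.not.mpr hane)
        set p : G → Prop := fun x => (x : G ⧸ A) = (g : G ⧸ A) with hp
        set a₁ : MonoidAlgebra R G := MonoidAlgebra.ofCoeff (a.coeff.filter p) with ha₁
        set a₂ : MonoidAlgebra R G := MonoidAlgebra.ofCoeff (a.coeff.filter (fun x => ¬ p x)) with ha₂
        have hsplit : a₁ + a₂ = a := MonoidAlgebra.coeff_injective (Finsupp.filter_pos_add_filter_neg a.coeff p)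
        -- a₁ lives in a single coset
        have hsupp₁ : ∀ x ∈ a₁.coeff.support, (x : G ⧸ A) = (g : G ⧸ A) := by
          intro x hx
          simp only [ha₁, MonoidAlgebra.coeff_ofCoeff, Finsupp.support_filter, Finset.mem_filter] at hx
          exact hx.2
        obtain ⟨y, hy⟩ := hrep a₁ g hsupp₁
        obtain ⟨sg, hsgS, hsgeq⟩ := hconj g s hs
        obtain ⟨c, t, htS, hyt⟩ := hdiv y sg hsgS
        have step1 : a₁ * ι t = ι s * ((MonoidAlgebra.of R G g) * ι c) := by
          rw [hy, mul_assoc, ← map_mul, hyt, map_mul, hsgeq]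
          have h1 : (MonoidAlgebra.of R G g) * ((MonoidAlgebra.of R G g⁻¹) * ι s
              * (MonoidAlgebra.of R G g)) = ι s * (MonoidAlgebra.of R G g) := by
            have : (MonoidAlgebra.of R G g) * (MonoidAlgebra.of R G g⁻¹) = 1 := by
              rw [← map_mul, mul_inv_cancel, map_one]
            rw [← mul_assoc, ← mul_assoc, this, one_mul]
          rw [← mul_assoc, h1, mul_assoc]
        -- apply induction hypothesis to a₂ * ι t
        have hcosets : ((a₂ * ι t).coeff.support.image (QuotientGroup.mk : G → G ⧸ A)).card ≤ n := by
          have himg : (a₂ * ι t).coeff.support.image (QuotientGroup.mk : G → G ⧸ A) ⊆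
              (a.coeff.support.image (QuotientGroup.mk : G → G ⧸ A)).erase (g : G ⧸ A) := by
            intro q hq
            rw [Finset.mem_image] at hq
            obtain ⟨x, hx, rfl⟩ := hq
            have hx' : x ∈ a₂.coeff.support * (ι t).coeff.support := MonoidAlgebra.support_coeff_mul_subset _ _ hx
            rw [Finset.mem_mul] at hx'
            obtain ⟨u, hu, v, hv, rfl⟩ := hx'
            have hvA : v ∈ A := hsupp_ι t v hv
            have hmk : ((u * v : G) : G ⧸ A) = (u : G ⧸ A) := by
              rw [QuotientGroup.eq]
              simpa [mul_inv_rev, mul_assoc] using A.inv_mem hvA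
            simp only [ha₂, MonoidAlgebra.coeff_ofCoeff, Finsupp.support_filter, Finset.mem_filter] at hu
            rw [hmk]
            refine Finset.mem_erase.mpr ⟨hu.2, Finset.mem_image_of_mem _ hu.1⟩
          calc ((a₂ * ι t).coeff.support.image (QuotientGroup.mk : G → G ⧸ A)).card
              ≤ ((a.coeff.support.image (QuotientGroup.mk : G → G ⧸ A)).erase (g : G ⧸ A)).card :=
                Finset.card_le_card himg
            _ = (a.coeff.support.image (QuotientGroup.mk : G → G ⧸ A)).card - 1 :=
                Finset.card_erase_of_mem (Finset.mem_image_of_mem _ hg)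
            _ ≤ n := by omega
        obtain ⟨b₂, s', hs'S, hstep2⟩ := ih (a₂ * ι t) hcosets s hs
        refine ⟨(MonoidAlgebra.of R G g) * ι c * ι s' + b₂, t * s', hmul t htS s' hs'S, ?_⟩
        calc a * ι (t * s') = (a₁ + a₂) * (ι t * ι s') := by rw [hsplit, map_mul]
          _ = (a₁ * ι t) * ι s' + (a₂ * ι t) * ι s' := by rw [add_mul, ← mul_assoc, ← mul_assoc]
          _ = ι s * ((MonoidAlgebra.of R G g) * ι c) * ι s' + ι s * b₂ := by
              rw [step1, hstep2]
          _ = ι s * ((MonoidAlgebra.of R G g) * ι c * ι s' + b₂) := by simp only [mul_add, mul_assoc]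
    intro a s hs
    exact key _ a le_rfl s hs
end

section
/- Let p be a nonzero Laurent polynomial over ℂ, let τ be a nonzero complex number, let r ≥ 2, let m ∈ ℤ, and let n₂, …, n_r be integers that are not all zero. Let Φ : ℂ[t^{±1}] → ℂ[x₁^{±1}, …, x_r^{±1}] be the ℂ-algebra homomorphism sending t to the monomial x₁^m x₂^{n₂} ⋯ x_r^{n_r} (the homomorphism of group algebras induced by the group homomorphism ℤ → ℤ^r, 1 ↦ (m, n₂, …, n_r)). Then x₁ − τ does not divide Φ(p) in ℂ[x₁^{±1}, …, x_r^{±1}]. -/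
open AddMonoidAlgebra Finsupp

/-- Let `p` be a nonzero Laurent polynomial over `ℂ`, `τ ≠ 0`, `r ≥ 2`, and let
`Φ : ℂ[t^{±1}] → ℂ[x₁^{±1},…,x_r^{±1}]` be induced by `t ↦ x₁^{v 0} x₂^{v 1} ⋯ x_r^{v (r-1)}`
(i.e. by the group homomorphism `ℤ → ℤ^r`, `1 ↦ v`), where the components of `v` other
than the first are not all zero.  Then `x₁ − τ` does not divide `Φ(p)`. -/
theorem x_sub_tau_not_dvd (r : ℕ) (hr : 2 ≤ r) (τ : ℂ) (hτ : τ ≠ 0)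
    (p : AddMonoidAlgebra ℂ ℤ) (hp : p ≠ 0)
    (v : Fin r → ℤ) (hv : ∃ i : Fin r, i ≠ ⟨0, by omega⟩ ∧ v i ≠ 0) :
    ¬ ((AddMonoidAlgebra.single (Pi.single (⟨0, by omega⟩ : Fin r) (1 : ℤ)) (1 : ℂ)
          - AddMonoidAlgebra.single 0 τ)
        ∣ AddMonoidAlgebra.mapDomainRingHom ℂ (zmultiplesHom (Fin r → ℤ) v) p) := by
  obtain ⟨i, hi0, hvi⟩ := hv
  set z : Fin r := ⟨0, by omega⟩ with hz
  let F : Multiplicative (Fin r → ℤ) →* AddMonoidAlgebra ℂ ℤ :=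
    { toFun := fun w => AddMonoidAlgebra.single (Multiplicative.toAdd w i)
        (τ ^ (Multiplicative.toAdd w z)),
      map_one' := by
        show AddMonoidAlgebra.single ((0 : Fin r → ℤ) i) (τ ^ ((0 : Fin r → ℤ) z)) = 1
        simp only [Pi.zero_apply, zpow_zero]
        rfl,
      map_mul' := by
        intro a b
        show AddMonoidAlgebra.single ((Multiplicative.toAdd a + Multiplicative.toAdd b) i)
            (τ ^ ((Multiplicative.toAdd a + Multiplicative.toAdd b) z)) = _
        rw [AddMonoidAlgebra.single_mul_single, Pi.add_apply, Pi.add_apply, zpow_add₀ hτ] }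
  let ψ := AddMonoidAlgebra.lift ℂ (AddMonoidAlgebra ℂ ℤ) (Fin r → ℤ) F
  rintro ⟨q, hq⟩
  have hzi : (Pi.single z 1 : Fin r → ℤ) i = 0 := by
    rw [Pi.single_apply, if_neg hi0]
  have h1 : ψ (AddMonoidAlgebra.single (Pi.single z (1:ℤ)) (1:ℂ)
      - AddMonoidAlgebra.single 0 τ) = 0 := by
    rw [map_sub, AddMonoidAlgebra.lift_single, AddMonoidAlgebra.lift_single]
    simp only [F, MonoidHom.coe_mk, OneHom.coe_mk, toAdd_ofAdd, toAdd_one, Pi.zero_apply]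
    rw [hzi, Pi.single_eq_same, zpow_one, one_smul, AddMonoidAlgebra.smul_single', zpow_zero, mul_one, sub_self]
  have h2 : ψ (AddMonoidAlgebra.mapDomainRingHom ℂ (zmultiplesHom (Fin r → ℤ) v) p) = 0 := by
    rw [hq, map_mul, h1, zero_mul]
  obtain ⟨n₀, hn₀⟩ := Finsupp.support_nonempty_iff.mpr (fun h => hp (AddMonoidAlgebra.coeff_eq_zero.mp h))
  have key : ψ (AddMonoidAlgebra.mapDomainRingHom ℂ (zmultiplesHom (Fin r → ℤ) v) p)
      = p.coeff.sum (fun n a => AddMonoidAlgebra.single (n * v i) (a * τ ^ (n * v z))) := by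
    have h3 : (AddMonoidAlgebra.mapDomainRingHom ℂ (zmultiplesHom (Fin r → ℤ) v) p)
        = p.coeff.sum (fun n a => AddMonoidAlgebra.single (n • v) a) := by
      conv_lhs => rw [← AddMonoidAlgebra.sum_coeff_single p]
      rw [map_finsuppSum]
      refine Finsupp.sum_congr ?_
      intro n _
      show AddMonoidAlgebra.mapDomain _ (AddMonoidAlgebra.single n _) = _
      rw [AddMonoidAlgebra.mapDomain_single]
      rfl
    rw [h3, map_finsuppSum]
    refine Finsupp.sum_congr ?_
    intro n hn
    rw [AddMonoidAlgebra.lift_single]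
    simp only [F, MonoidHom.coe_mk, OneHom.coe_mk, toAdd_ofAdd]
    rw [AddMonoidAlgebra.smul_single', Pi.smul_apply, Pi.smul_apply, smul_eq_mul, smul_eq_mul]
  have hcoeff : (ψ (AddMonoidAlgebra.mapDomainRingHom ℂ (zmultiplesHom (Fin r → ℤ) v) p)).coeff
      (n₀ * v i) = p.coeff n₀ * τ ^ (n₀ * v z) := by
    rw [key, AddMonoidAlgebra.coeff_finsuppSum, Finsupp.sum_apply, Finsupp.sum, Finset.sum_eq_single n₀]
    · exact Finsupp.single_eq_same
    · intro n hn hne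
      rw [AddMonoidAlgebra.coeff_single, Finsupp.single_apply, if_neg]
      intro h
      exact hne (mul_right_cancel₀ hvi h)
    · intro h
      exact absurd hn₀ h
  rw [h2] at hcoeff
  exact (mul_ne_zero (Finsupp.mem_support_iff.mp hn₀) (zpow_ne_zero _ hτ)) hcoeff.symm
end

section
/- Let p(t) and q(t) be nonzero Laurent polynomials over ℚ. Then p and q are strongly coprime if and only if for every r ≥ 1 and every pair of nontrivial elements a, b of the free abelian group ℤ^r (written multiplicatively), the elements p(a) and q(b) are relatively prime in the group algebra ℚ[ℤ^r], i.e., every common divisor of p(a) and q(b) in ℚ[ℤ^r] is a unit. -/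
set_option maxHeartbeats 1000000

open Finsupp AddMonoidAlgebra

namespace CHL
variable {r : ℕ}

lemma mapDomain_comp {α β γ : Type*} [AddMonoid α] {f : α → β} {g : β → γ} {x : AddMonoidAlgebra ℚ α} :
    AddMonoidAlgebra.mapDomain (g ∘ f) x = AddMonoidAlgebra.mapDomain g (AddMonoidAlgebra.mapDomain f x) :=
  AddMonoidAlgebra.ext Finsupp.mapDomain_comp

lemma mapDomain_id {α : Type*} {x : AddMonoidAlgebra ℚ α} :
    AddMonoidAlgebra.mapDomain id x = x :=
  AddMonoidAlgebra.ext Finsupp.mapDomain_id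

lemma key (ψ : (Fin r → ℤ) →+ ℤ) {f e : AddMonoidAlgebra ℚ (Fin r → ℤ)}
    (hf : f ≠ 0) (he : e ≠ 0) :
    ∃ x ∈ f.coeff.support, ∃ y ∈ e.coeff.support,
      (∀ x' ∈ f.coeff.support, ψ x' ≤ ψ x) ∧ (∀ y' ∈ e.coeff.support, ψ y' ≤ ψ y) ∧
      x + y ∈ (f * e).coeff.support := by
  classical
  letI : WellFoundedLT (Fin r) := inferInstance
  letI : IsOrderedCancelAddMonoid (Lex (Fin r → ℤ)) := inferInstance
  set D : (Fin r → ℤ) → ℤ ×ₗ Lex (Fin r → ℤ) := fun x => toLex (ψ x, toLex x) with hD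
  have hDadd : ∀ u v, D (u + v) = D u + D v := by
    intro u v; simp only [hD, map_add]; rfl
  have hDinj : Function.Injective D := by
    intro u v huv
    have : (ψ u, toLex u) = (ψ v, toLex v) := toLex.injective huv
    exact toLex.injective (congrArg Prod.snd this)
  have hDle : ∀ u v, D u ≤ D v → ψ u ≤ ψ v := by
    intro u v huv
    rcases Prod.Lex.le_iff.1 huv with h | h
    · exact h.le
    · exact h.1.le
  obtain ⟨x, hx, hxmax⟩ := f.coeff.support.exists_max_image D (Finsupp.support_nonempty_iff.2 (mt AddMonoidAlgebra.coeff_eq_zero.1 hf))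
  obtain ⟨y, hy, hymax⟩ := e.coeff.support.exists_max_image D (Finsupp.support_nonempty_iff.2 (mt AddMonoidAlgebra.coeff_eq_zero.1 he))
  refine ⟨x, hx, y, hy, fun x' hx' => hDle _ _ (hxmax x' hx'),
    fun y' hy' => hDle _ _ (hymax y' hy'), ?_⟩
  rw [Finsupp.mem_support_iff]
  have hmul : (f * e).coeff (x + y) = f.coeff x * e.coeff y := by
    rw [AddMonoidAlgebra.coeff_mul]
    rw [Finsupp.sum]
    rw [Finset.sum_eq_single x]
    · rw [Finsupp.sum, Finset.sum_eq_single y]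
      · simp
      · intro a₂ ha₂ hne
        rw [if_neg]
        intro hcon
        exact hne (add_left_cancel hcon)
      · intro hyn; exact absurd hy hyn
    · intro a₁ ha₁ hne
      rw [Finsupp.sum]
      apply Finset.sum_eq_zero
      intro a₂ ha₂
      rw [if_neg]
      intro hcon
      have h1 : D a₁ < D x := lt_of_le_of_ne (hxmax a₁ ha₁) (fun h => hne (hDinj h))
      have h2 : D a₂ ≤ D y := hymax a₂ ha₂
      have : D a₁ + D a₂ < D x + D y := add_lt_add_of_lt_of_le h1 h2
      rw [← hDadd, ← hDadd, hcon] at this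
      exact lt_irrefl _ this
    · intro hxn; exact absurd hx hxn
  rw [hmul]
  exact mul_ne_zero (Finsupp.mem_support_iff.1 hx) (Finsupp.mem_support_iff.1 hy)

lemma const (ψ : (Fin r → ℤ) →+ ℤ) {f e : AddMonoidAlgebra ℚ (Fin r → ℤ)}
    (hf : f ≠ 0) (he : e ≠ 0)
    (hP : ∀ z ∈ (f * e).coeff.support, ψ z = 0) :
    ∀ x ∈ f.coeff.support, ∀ x' ∈ f.coeff.support, ψ x = ψ x' := by
  obtain ⟨x1, hx1, y1, hy1, hxm1, hym1, hz1⟩ := key ψ hf he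
  obtain ⟨x2, hx2, y2, hy2, hxm2, hym2, hz2⟩ := key (-ψ) hf he
  have h1 : ψ x1 + ψ y1 = 0 := by rw [← map_add]; exact hP _ hz1
  have h2 : ψ x2 + ψ y2 = 0 := by rw [← map_add]; exact hP _ hz2
  have hxlo : ∀ x' ∈ f.coeff.support, ψ x2 ≤ ψ x' := by
    intro x' hx'
    have := hxm2 x' hx'
    simpa using this
  have hylo : ∀ y' ∈ e.coeff.support, ψ y2 ≤ ψ y' := by
    intro y' hy'
    have := hym2 y' hy'
    simpa using this
  have hx12 : ψ x2 = ψ x1 := le_antisymm (hxm1 x2 hx2) (by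
    have hy12 : ψ y2 ≤ ψ y1 := hym1 y2 hy2
    omega)
  intro x hx x' hx'
  have := hxm1 x hx; have := hxlo x hx; have := hxm1 x' hx'; have := hxlo x' hx'
  omega

lemma trick {v x : Fin r → ℤ} (hv : v ≠ 0)
    (h : ∀ ψ : (Fin r → ℤ) →+ ℤ, ψ v = 0 → ψ x = 0) :
    ∃ k j : ℤ, k ≠ 0 ∧ k • x = j • v := by
  obtain ⟨i, hi⟩ := Function.ne_iff.1 hv
  have hi' : v i ≠ 0 := by simpa using hi
  refine ⟨v i, x i, hi', ?_⟩
  funext j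
  have hj := h (AddMonoidHom.mk' (fun w => v i * w j - v j * w i)
    (by intro w w'; simp only [Pi.add_apply]; ring))
    (by simp only [AddMonoidHom.mk'_apply]; ring)
  simp only [AddMonoidHom.mk'_apply] at hj
  simp only [Pi.smul_apply, smul_eq_mul]
  rw [mul_comm (x i) (v j)]
  omega

lemma supp_diff {v : Fin r → ℤ} (hv : v ≠ 0) {d F : AddMonoidAlgebra ℚ (Fin r → ℤ)}
    (hF : F ≠ 0) (hdF : d ∣ F) (hsupp : ∀ z ∈ F.coeff.support, ∃ n : ℤ, z = n • v) :
    ∀ x ∈ d.coeff.support, ∀ x' ∈ d.coeff.support, ∃ k j : ℤ, k ≠ 0 ∧ k • (x - x') = j • v := by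
  obtain ⟨e, rfl⟩ := hdF
  have hd : d ≠ 0 := fun h => hF (by rw [h, zero_mul])
  have he : e ≠ 0 := fun h => hF (by rw [h, mul_zero])
  intro x hx x' hx'
  apply trick hv
  intro ψ hψ
  have hc := const ψ hd he (fun z hz => by
    obtain ⟨n, rfl⟩ := hsupp z hz
    rw [map_zsmul, hψ, smul_zero]) x hx x' hx'
  rw [map_sub, hc, sub_self]

lemma isUnit_single (x : Fin r → ℤ) {c : ℚ} (hc : c ≠ 0) :
    IsUnit (AddMonoidAlgebra.single x c : AddMonoidAlgebra ℚ (Fin r → ℤ)) := by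
  apply IsUnit.of_mul_eq_one (AddMonoidAlgebra.single (-x) c⁻¹)
  rw [AddMonoidAlgebra.single_mul_single, add_neg_cancel, mul_inv_cancel₀ hc,
    ← AddMonoidAlgebra.one_def]

lemma zsmul_injective {a : Fin r → ℤ} (ha : a ≠ 0) :
    Function.Injective (fun n : ℤ => n • a) := by
  obtain ⟨i, hi⟩ := Function.ne_iff.1 ha
  have hi' : a i ≠ 0 := by simpa using hi
  intro n n' h
  have : n * a i = n' * a i := by
    have := congrFun h i
    simpa using this
  exact mul_right_cancel₀ hi' this

lemma exists_gen {a : Fin r → ℤ} (ha : a ≠ 0) :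
    ∃ g : Fin r → ℤ, g ≠ 0 ∧
      (∀ x : Fin r → ℤ, (∃ k j : ℤ, k ≠ 0 ∧ k • x = j • a) → ∃ k : ℤ, x = k • g) := by
  obtain ⟨i, hi⟩ := Function.ne_iff.1 ha
  have hi' : a i ≠ 0 := by simpa using hi
  set L : AddSubgroup (Fin r → ℤ) :=
    { carrier := {x | ∃ k j : ℤ, k ≠ 0 ∧ k • x = j • a}
      zero_mem' := ⟨1, 0, one_ne_zero, by simp⟩
      add_mem' := by
        rintro x y ⟨k1, j1, hk1, h1⟩ ⟨k2, j2, hk2, h2⟩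
        refine ⟨k1 * k2, k2 * j1 + k1 * j2, mul_ne_zero hk1 hk2, ?_⟩
        rw [smul_add, add_smul]
        congr 1
        · rw [mul_comm k1 k2, mul_smul, h1, mul_smul]
        · rw [mul_smul, h2, mul_smul]
      neg_mem' := by
        rintro x ⟨k, j, hk, h⟩
        exact ⟨k, -j, hk, by rw [smul_neg, h, neg_smul]⟩ } with hL
  have hLinj : ∀ x ∈ L, x i = 0 → x = 0 := by
    rintro x ⟨k, j, hk, hkx⟩ hxi
    have hco : k * x i = j * a i := by
      have := congrFun hkx i
      simpa using this
    have hj : j = 0 := by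
      rw [hxi, mul_zero] at hco
      rcases mul_eq_zero.1 hco.symm with h | h
      · exact h
      · exact absurd h hi'
    have : k • x = 0 := by rw [hkx, hj, zero_smul]
    rcases smul_eq_zero.1 this with h | h
    · exact absurd h hk
    · exact h
  have haL : a ∈ L := ⟨1, 1, one_ne_zero, by simp⟩
  set M : AddSubgroup ℤ := L.map (Pi.evalAddMonoidHom (fun _ : Fin r => ℤ) i) with hM
  obtain ⟨c, hc⟩ := Int.subgroup_cyclic M
  have haiM : a i ∈ M := AddSubgroup.mem_map_of_mem _ haL
  have hc0 : c ≠ 0 := by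
    rintro rfl
    rw [hc, AddSubgroup.mem_closure_singleton] at haiM
    obtain ⟨n, hn⟩ := haiM
    rw [smul_zero] at hn
    exact hi' hn.symm
  have hcM : c ∈ M := by
    rw [hc, AddSubgroup.mem_closure_singleton]
    exact ⟨1, one_smul _ _⟩
  obtain ⟨g, hgL, hgi⟩ := AddSubgroup.mem_map.1 hcM
  have hgi' : g i = c := hgi
  refine ⟨g, fun h => hc0 (by rw [← hgi', h]; rfl), ?_⟩
  rintro x hx
  have hxM : x i ∈ M := AddSubgroup.mem_map_of_mem _ hx
  rw [hc, AddSubgroup.mem_closure_singleton] at hxM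
  obtain ⟨k, hk⟩ := hxM
  refine ⟨k, ?_⟩
  have hyL : x - k • g ∈ L := AddSubgroup.sub_mem _ hx (AddSubgroup.zsmul_mem _ hgL k)
  have hyi : (x - k • g) i = 0 := by
    simp [hgi', ← hk, smul_eq_mul]
  have := hLinj _ hyL hyi
  rw [sub_eq_zero] at this
  exact this

/-- transfer divisibility down to `ℚ[ℤ]` along `k ↦ k • g`. -/
lemma dvd_transfer {g : Fin r → ℤ} (hg : g ≠ 0)
    (hgen : ∀ x : Fin r → ℤ, (∃ k j : ℤ, k ≠ 0 ∧ k • x = j • g) → ∃ k : ℤ, x = k • g)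
    {d' P : AddMonoidAlgebra ℚ (Fin r → ℤ)} {d₀ p₀ : AddMonoidAlgebra ℚ ℤ}
    (hd : AddMonoidAlgebra.mapDomainRingHom ℚ (zmultiplesHom (Fin r → ℤ) g) d₀ = d')
    (hp : AddMonoidAlgebra.mapDomainRingHom ℚ (zmultiplesHom (Fin r → ℤ) g) p₀ = P)
    (hP0 : P ≠ 0) (hsP : ∀ z ∈ P.coeff.support, ∃ k : ℤ, z = k • g)
    (hdvd : d' ∣ P) : d₀ ∣ p₀ := by
  classical
  have hι : Function.Injective (fun k : ℤ => k • g) := zsmul_injective hg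
  set Ψ : AddMonoidAlgebra ℚ ℤ →+* AddMonoidAlgebra ℚ (Fin r → ℤ) :=
    AddMonoidAlgebra.mapDomainRingHom ℚ (zmultiplesHom (Fin r → ℤ) g) with hΨ
  have hΨeq : ∀ x : AddMonoidAlgebra ℚ ℤ, Ψ x = AddMonoidAlgebra.mapDomain (fun k : ℤ => k • g) x :=
    fun x => rfl
  have hΨinj : Function.Injective Ψ := by
    intro x y h
    apply AddMonoidAlgebra.mapDomain_injective hι
    rw [← hΨeq, ← hΨeq]
    exact h
  obtain ⟨e, he⟩ := hdvd
  have hd'0 : d' ≠ 0 := fun h => hP0 (by rw [he, h, zero_mul])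
  have he0 : e ≠ 0 := fun h => hP0 (by rw [he, h, mul_zero])
  have hsd' : ∀ z ∈ d'.coeff.support, ∃ k : ℤ, z = k • g := by
    intro z hz
    rw [← hd, hΨeq] at hz
    have := Finsupp.mapDomain_support hz
    obtain ⟨k, _, hk⟩ := Finset.mem_image.1 this
    exact ⟨k, hk.symm⟩
  -- find an anchor element of e.coeff.support of the form k • g
  obtain ⟨z, hz⟩ := Finsupp.support_nonempty_iff.2 (mt AddMonoidAlgebra.coeff_eq_zero.1 hP0)
  have hz' : z ∈ (d' * e).coeff.support := by rw [← he]; exact hz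
  have hz'' := AddMonoidAlgebra.support_coeff_mul_subset d' e hz'
  obtain ⟨xh, hxh, yh, hyh, hxy⟩ := Finset.mem_add.1 hz''
  obtain ⟨kx, hkx⟩ := hsd' xh hxh
  obtain ⟨kz, hkz⟩ := hsP z hz
  have hyhg : yh = (kz - kx) • g := by
    have : yh = z - xh := by rw [← hxy]; abel
    rw [this, hkz, hkx, sub_smul]
  -- every element of e.coeff.support is a multiple of g
  have hse : ∀ y' ∈ e.coeff.support, ∃ k : ℤ, y' = k • g := by
    intro y' hy'
    have hconst : ∀ ψ : (Fin r → ℤ) →+ ℤ, ψ g = 0 → ψ y' = ψ yh := by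
      intro ψ hψ
      have hPsupp : ∀ z' ∈ (e * d').coeff.support, ψ z' = 0 := by
        intro z' hz'
        rw [mul_comm, ← he] at hz'
        obtain ⟨k, rfl⟩ := hsP z' hz'
        rw [map_zsmul, hψ, smul_zero]
      exact const ψ he0 hd'0 hPsupp y' hy' yh hyh
    have hdiff : ∀ ψ : (Fin r → ℤ) →+ ℤ, ψ g = 0 → ψ (y' - yh) = 0 := by
      intro ψ hψ
      rw [map_sub, hconst ψ hψ, sub_self]
    obtain ⟨k', hk'⟩ := hgen _ (trick hg hdiff)
    refine ⟨kz - kx + k', ?_⟩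
    have : y' = yh + (y' - yh) := by abel
    rw [this, hk', hyhg, ← add_smul]
  -- pull e back
  set e₀ : AddMonoidAlgebra ℚ ℤ := AddMonoidAlgebra.comapDomain (fun k : ℤ => k • g) hι e with he₀
  have hmape : Ψ e₀ = e := by
    rw [hΨeq]
    exact AddMonoidAlgebra.mapDomain_comapDomain
      (by rintro z hz; obtain ⟨k, hk⟩ := hse z hz; exact ⟨k, hk.symm⟩) hι
  refine ⟨e₀, hΨinj ?_⟩
  rw [map_mul, hd, hmape, hp, he]

end CHL

/-- Proposition 4.5 of Cochran–Harvey–Leidy: nonzero Laurent polynomials `p`, `q` over `ℚ`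
are strongly coprime (i.e. `p(t^m)` and `q(t^n)` are relatively prime in `ℚ[t^{±1}]` for all
nonzero integers `m`, `n`) if and only if for every `r ≥ 1` and all nontrivial `a`, `b` in the
free abelian group `ℤ^r`, the elements `p(a)` and `q(b)` are relatively prime in the group
algebra `ℚ[ℤ^r]`. -/
theorem strongly_coprime_iff_relPrime_in_free_abelian
    (p q : AddMonoidAlgebra ℚ ℤ) (hp : p ≠ 0) (hq : q ≠ 0) :
    (∀ m n : ℤ, m ≠ 0 → n ≠ 0 →
      ∀ d : AddMonoidAlgebra ℚ ℤ,
        d ∣ AddMonoidAlgebra.mapDomainRingHom ℚ (zmultiplesHom ℤ m) p →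
        d ∣ AddMonoidAlgebra.mapDomainRingHom ℚ (zmultiplesHom ℤ n) q →
        IsUnit d) ↔
    (∀ r : ℕ, 1 ≤ r → ∀ a b : Fin r → ℤ, a ≠ 0 → b ≠ 0 →
      ∀ d : AddMonoidAlgebra ℚ (Fin r → ℤ),
        d ∣ AddMonoidAlgebra.mapDomainRingHom ℚ (zmultiplesHom (Fin r → ℤ) a) p →
        d ∣ AddMonoidAlgebra.mapDomainRingHom ℚ (zmultiplesHom (Fin r → ℤ) b) q →
        IsUnit d) := by
  constructor
  · -- forward direction
    intro H1 r hr a b ha hb d hda hdb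
    classical
    set P := AddMonoidAlgebra.mapDomainRingHom ℚ (zmultiplesHom (Fin r → ℤ) a) p with hPdef
    set Q := AddMonoidAlgebra.mapDomainRingHom ℚ (zmultiplesHom (Fin r → ℤ) b) q with hQdef
    have hPm : P = AddMonoidAlgebra.mapDomain (fun n : ℤ => n • a) p := rfl
    have hQm : Q = AddMonoidAlgebra.mapDomain (fun n : ℤ => n • b) q := rfl
    have hP0 : P ≠ 0 := by
      rw [hPm]
      intro h
      exact hp (AddMonoidAlgebra.mapDomain_injective (CHL.zsmul_injective ha)
        (by rw [h, AddMonoidAlgebra.mapDomain_zero]))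
    have hQ0 : Q ≠ 0 := by
      rw [hQm]
      intro h
      exact hq (AddMonoidAlgebra.mapDomain_injective (CHL.zsmul_injective hb)
        (by rw [h, AddMonoidAlgebra.mapDomain_zero]))
    have hsP : ∀ z ∈ P.coeff.support, ∃ k : ℤ, z = k • a := by
      intro z hz
      rw [hPm] at hz
      obtain ⟨k, _, hk⟩ := Finset.mem_image.1 (Finsupp.mapDomain_support hz)
      exact ⟨k, hk.symm⟩
    have hsQ : ∀ z ∈ Q.coeff.support, ∃ k : ℤ, z = k • b := by
      intro z hz
      rw [hQm] at hz
      obtain ⟨k, _, hk⟩ := Finset.mem_image.1 (Finsupp.mapDomain_support hz)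
      exact ⟨k, hk.symm⟩
    have hd0 : d ≠ 0 := by
      rintro rfl
      obtain ⟨ep, hep⟩ := hda
      rw [zero_mul] at hep
      exact hP0 hep
    have hdiffa := CHL.supp_diff ha hP0 hda hsP
    have hdiffb := CHL.supp_diff hb hQ0 hdb hsQ
    obtain ⟨x₀, hx₀⟩ := Finsupp.support_nonempty_iff.2 (mt AddMonoidAlgebra.coeff_eq_zero.1 hd0)
    by_cases hdep : ∃ s t : ℤ, s ≠ 0 ∧ s • a = t • b
    · -- rationally dependent case
      obtain ⟨s, t, hs, hst⟩ := hdep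
      have ht : t ≠ 0 := by
        rintro rfl
        rw [zero_smul] at hst
        rcases smul_eq_zero.1 hst with h | h
        · exact hs h
        · exact ha h
      obtain ⟨g, hg0, hgen⟩ := CHL.exists_gen ha
      obtain ⟨m, ham⟩ := hgen a ⟨1, 1, one_ne_zero, rfl⟩
      have hm0 : m ≠ 0 := by rintro rfl; rw [zero_smul] at ham; exact ha ham
      obtain ⟨n, hbn⟩ := hgen b ⟨t, s, ht, by rw [hst]⟩
      have hn0 : n ≠ 0 := by rintro rfl; rw [zero_smul] at hbn; exact hb hbn
      have hgeng : ∀ x : Fin r → ℤ, (∃ k j : ℤ, k ≠ 0 ∧ k • x = j • g) → ∃ k : ℤ, x = k • g := by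
        rintro x ⟨k, j, hk, hkx⟩
        refine hgen x ⟨m * k, j, mul_ne_zero hm0 hk, ?_⟩
        rw [mul_smul, hkx, ham, smul_comm]
      set d' := AddMonoidAlgebra.single (-x₀) (1 : ℚ) * d with hd'def
      have hdd' : AddMonoidAlgebra.single x₀ (1 : ℚ) * d' = d := by
        rw [hd'def, ← mul_assoc, AddMonoidAlgebra.single_mul_single, add_neg_cancel, mul_one,
          ← AddMonoidAlgebra.one_def, one_mul]
      have hd'0 : d' ≠ 0 := fun h => hd0 (by rw [← hdd', h, mul_zero])
      have hsd' : ∀ z ∈ d'.coeff.support, ∃ k : ℤ, z = k • g := by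
        intro z hz
        have hz' : x₀ + z ∈ d.coeff.support := by
          rw [Finsupp.mem_support_iff] at hz ⊢
          intro h0
          apply hz
          rw [hd'def, AddMonoidAlgebra.coeff_single_mul_apply, neg_neg, h0, mul_zero]
        obtain ⟨k, j, hk, hkz⟩ := hdiffa _ hz' _ hx₀
        refine hgen z ⟨k, j, hk, ?_⟩
        rw [← hkz]
        congr 1
        abel
      have hd'P : d' ∣ P := by
        obtain ⟨ep, hep⟩ := hda
        refine ⟨AddMonoidAlgebra.single x₀ 1 * ep, ?_⟩
        rw [hd'def, mul_mul_mul_comm, AddMonoidAlgebra.single_mul_single, neg_add_cancel,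
          one_mul, ← AddMonoidAlgebra.one_def, one_mul, hep]
      have hd'Q : d' ∣ Q := by
        obtain ⟨eq', heq'⟩ := hdb
        refine ⟨AddMonoidAlgebra.single x₀ 1 * eq', ?_⟩
        rw [hd'def, mul_mul_mul_comm, AddMonoidAlgebra.single_mul_single, neg_add_cancel,
          one_mul, ← AddMonoidAlgebra.one_def, one_mul, heq']
      set Ψ : AddMonoidAlgebra ℚ ℤ →+* AddMonoidAlgebra ℚ (Fin r → ℤ) :=
        AddMonoidAlgebra.mapDomainRingHom ℚ (zmultiplesHom (Fin r → ℤ) g) with hΨ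
      have hΨeq : ∀ x : AddMonoidAlgebra ℚ ℤ, Ψ x = AddMonoidAlgebra.mapDomain (fun k : ℤ => k • g) x :=
        fun x => rfl
      have hι : Function.Injective (fun k : ℤ => k • g) := CHL.zsmul_injective hg0
      set d₀ : AddMonoidAlgebra ℚ ℤ := AddMonoidAlgebra.comapDomain (fun k : ℤ => k • g) hι d' with hd₀def
      have hΨd : Ψ d₀ = d' := by
        rw [hΨeq]
        exact AddMonoidAlgebra.mapDomain_comapDomain
          (by rintro z hz; obtain ⟨k, hk⟩ := hsd' z hz; exact ⟨k, hk.symm⟩) hι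
      have hΨp : Ψ (AddMonoidAlgebra.mapDomainRingHom ℚ (zmultiplesHom ℤ m) p) = P := by
        rw [hΨeq]
        have h1 : (AddMonoidAlgebra.mapDomainRingHom ℚ (zmultiplesHom ℤ m) p
            : AddMonoidAlgebra ℚ ℤ) = AddMonoidAlgebra.mapDomain (fun k : ℤ => k • m) p := rfl
        rw [h1, hPm, ← CHL.mapDomain_comp]
        congr 1
        funext k
        show (k • m) • g = k • a
        rw [smul_eq_mul, mul_smul, ← ham]
      have hΨq : Ψ (AddMonoidAlgebra.mapDomainRingHom ℚ (zmultiplesHom ℤ n) q) = Q := by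
        rw [hΨeq]
        have h1 : (AddMonoidAlgebra.mapDomainRingHom ℚ (zmultiplesHom ℤ n) q
            : AddMonoidAlgebra ℚ ℤ) = AddMonoidAlgebra.mapDomain (fun k : ℤ => k • n) q := rfl
        rw [h1, hQm, ← CHL.mapDomain_comp]
        congr 1
        funext k
        show (k • n) • g = k • b
        rw [smul_eq_mul, mul_smul, ← hbn]
      have hsPg : ∀ z ∈ P.coeff.support, ∃ k : ℤ, z = k • g := by
        intro z hz
        obtain ⟨k, hk⟩ := hsP z hz
        exact ⟨k * m, by rw [hk, ham, mul_smul]⟩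
      have hsQg : ∀ z ∈ Q.coeff.support, ∃ k : ℤ, z = k • g := by
        intro z hz
        obtain ⟨k, hk⟩ := hsQ z hz
        exact ⟨k * n, by rw [hk, hbn, mul_smul]⟩
      have hdp₀ := CHL.dvd_transfer hg0 hgeng hΨd hΨp hP0 hsPg hd'P
      have hdq₀ := CHL.dvd_transfer hg0 hgeng hΨd hΨq hQ0 hsQg hd'Q
      have hu₀ : IsUnit d₀ := H1 m n hm0 hn0 d₀ hdp₀ hdq₀
      have hu' : IsUnit d' := by
        rw [← hΨd]
        exact hu₀.map Ψ
      rw [← hdd']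
      exact (CHL.isUnit_single x₀ one_ne_zero).mul hu'
    · -- rationally independent case: support of d is a single point
      have hsub : d.coeff.support ⊆ {x₀} := by
        intro x hx
        rw [Finset.mem_singleton]
        by_contra hne
        obtain ⟨k1, j1, hk1, h1⟩ := hdiffa x hx x₀ hx₀
        obtain ⟨k2, j2, hk2, h2⟩ := hdiffb x hx x₀ hx₀
        have hw0 : x - x₀ ≠ 0 := sub_ne_zero_of_ne hne
        have hj1 : j1 ≠ 0 := by
          rintro rfl
          rw [zero_smul] at h1
          rcases smul_eq_zero.1 h1 with h | h
          · exact hk1 h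
          · exact hw0 h
        refine hdep ⟨k2 * j1, k1 * j2, mul_ne_zero hk2 hj1, ?_⟩
        rw [mul_smul, mul_smul, ← h1, ← h2, smul_comm]
      rw [← AddMonoidAlgebra.ofCoeff_coeff d, Finsupp.support_subset_singleton.1 hsub]
      exact CHL.isUnit_single x₀ (Finsupp.mem_support_iff.1 hx₀)
  · -- backward direction
    intro H2 m n hm hn d hdm hdn
    classical
    set a : Fin 1 → ℤ := fun _ => m with hadef
    set b : Fin 1 → ℤ := fun _ => n with hbdef
    have ha : a ≠ 0 := fun h => hm (congrFun h 0)
    have hb : b ≠ 0 := fun h => hn (congrFun h 0)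
    set ee : ℤ →+ (Fin 1 → ℤ) := AddMonoidHom.mk' (fun z _ => z) (fun _ _ => rfl) with heedef
    set Θ : AddMonoidAlgebra ℚ ℤ →+* AddMonoidAlgebra ℚ (Fin 1 → ℤ) :=
      AddMonoidAlgebra.mapDomainRingHom ℚ ee with hΘ
    have key1 : Θ (AddMonoidAlgebra.mapDomainRingHom ℚ (zmultiplesHom ℤ m) p)
        = AddMonoidAlgebra.mapDomainRingHom ℚ (zmultiplesHom (Fin 1 → ℤ) a) p := by
      show AddMonoidAlgebra.mapDomain ⇑ee (AddMonoidAlgebra.mapDomain (fun k : ℤ => k • m) p)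
        = AddMonoidAlgebra.mapDomain (fun k : ℤ => k • a) p
      rw [← CHL.mapDomain_comp]
      congr 1
    have key2 : Θ (AddMonoidAlgebra.mapDomainRingHom ℚ (zmultiplesHom ℤ n) q)
        = AddMonoidAlgebra.mapDomainRingHom ℚ (zmultiplesHom (Fin 1 → ℤ) b) q := by
      show AddMonoidAlgebra.mapDomain ⇑ee (AddMonoidAlgebra.mapDomain (fun k : ℤ => k • n) q)
        = AddMonoidAlgebra.mapDomain (fun k : ℤ => k • b) q
      rw [← CHL.mapDomain_comp]
      congr 1
    have h1 : Θ d ∣ AddMonoidAlgebra.mapDomainRingHom ℚ (zmultiplesHom (Fin 1 → ℤ) a) p := by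
      rw [← key1]
      exact map_dvd Θ hdm
    have h2 : Θ d ∣ AddMonoidAlgebra.mapDomainRingHom ℚ (zmultiplesHom (Fin 1 → ℤ) b) q := by
      rw [← key2]
      exact map_dvd Θ hdn
    have hu : IsUnit (Θ d) := H2 1 le_rfl a b ha hb (Θ d) h1 h2
    set Θ' : AddMonoidAlgebra ℚ (Fin 1 → ℤ) →+* AddMonoidAlgebra ℚ ℤ :=
      AddMonoidAlgebra.mapDomainRingHom ℚ (Pi.evalAddMonoidHom (fun _ : Fin 1 => ℤ) 0) with hΘ'
    have hid : Θ' (Θ d) = d := by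
      show AddMonoidAlgebra.mapDomain ⇑(Pi.evalAddMonoidHom (fun _ : Fin 1 => ℤ) 0)
        (AddMonoidAlgebra.mapDomain ⇑ee d) = d
      rw [← CHL.mapDomain_comp]
      have : (⇑(Pi.evalAddMonoidHom (fun _ : Fin 1 => ℤ) 0) ∘ ⇑ee) = id := rfl
      rw [this, CHL.mapDomain_id]
    rw [← hid]
    exact hu.map Θ'
end

section
/- Let R be a commutative ring and G a group such that the group ring R[G] is a domain (nonzero with no zero divisors), and let A be a subgroup of G. Suppose p and s are elements of R[G] whose supports are contained in A, that p ≠ 0, and that f ∈ R[G] satisfies s = p·f. Then the support of f is contained in A. -/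
/-- Let `R` be a commutative ring and `G` a group such that `R[G]` is a domain, and let
`A ≤ G` be a subgroup. If `p, s ∈ R[G]` have supports contained in `A`, `p ≠ 0`, and
`s = p·f`, then the support of `f` is contained in `A`. -/
theorem support_of_factor_in_subgroup
    (R : Type*) [CommRing R] (G : Type*) [Group G]
    (hdom : IsDomain (MonoidAlgebra R G)) (A : Subgroup G)
    (p s f : MonoidAlgebra R G)
    (hps : (p.coeff.support : Set G) ⊆ (A : Set G))
    (hss : (s.coeff.support : Set G) ⊆ (A : Set G))
    (hp : p ≠ 0) (h : s = p * f) :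
    (f.coeff.support : Set G) ⊆ (A : Set G) := by
  classical
  set f₁ : MonoidAlgebra R G := MonoidAlgebra.ofCoeff (f.coeff.filter (fun g => g ∈ A)) with hf₁
  set f₂ : MonoidAlgebra R G := MonoidAlgebra.ofCoeff (f.coeff.filter (fun g => ¬ g ∈ A)) with hf₂
  have hsum : f₁ + f₂ = f := MonoidAlgebra.coeff_injective (Finsupp.filter_pos_add_filter_neg f.coeff _)
  have hf₂0 : f₂ = 0 := by
    have h2 : p * f₂ = s - p * f₁ := by
      have : p * f = p * f₁ + p * f₂ := by rw [← mul_add, hsum]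
      rw [h, this, add_sub_cancel_left]
    -- support of p * f₂ is outside A
    have hout : ∀ g ∈ (p * f₂).coeff.support, g ∉ A := by
      intro g hg
      have := MonoidAlgebra.support_coeff_mul_subset p f₂ hg
      rw [Finset.mem_mul] at this
      obtain ⟨a, ha, b, hb, rfl⟩ := this
      have haA : a ∈ A := hps ha
      have hbA : ¬ b ∈ A := (by rw [hf₂, MonoidAlgebra.coeff_ofCoeff, Finsupp.support_filter] at hb; exact (Finset.mem_filter.1 hb).2)
      intro hab
      exact hbA (by simpa using A.mul_mem (A.inv_mem haA) hab)
    have hin : ∀ g ∈ (p * f₂).coeff.support, g ∈ A := by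
      intro g hg
      rw [h2] at hg
      rcases Finset.mem_union.1 (Finsupp.support_sub hg) with hg | hg
      · exact hss hg
      · have := MonoidAlgebra.support_coeff_mul_subset p f₁ hg
        rw [Finset.mem_mul] at this
        obtain ⟨a, ha, b, hb, rfl⟩ := this
        exact A.mul_mem (hps ha) (by rw [hf₁, MonoidAlgebra.coeff_ofCoeff, Finsupp.support_filter] at hb; exact (Finset.mem_filter.1 hb).2)
    have : p * f₂ = 0 := by
      ext g
      by_contra hne
      have hg : g ∈ (p * f₂).coeff.support := Finsupp.mem_support_iff.2 hne
      exact hout g hg (hin g hg)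
    rcases mul_eq_zero.1 this with h' | h'
    · exact absurd h' hp
    · exact h'
  intro g hg
  have : f = f₁ := by rw [← hsum, hf₂0, add_zero]
  rw [this] at hg
  rw [hf₁, MonoidAlgebra.coeff_ofCoeff, Finsupp.support_filter] at hg; exact (Finset.mem_filter.1 hg).2
end
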